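/- Let γ be a unit-speed Frenet curve with κ > 0 and let β be the integral curve of X = xT + yN + zB with x² + y² + z² = 1. If the principal normal of β equals N (Bertrand condition, i.e., β'' is a nonzero multiple of N), then x and z are constants with x² + z² = 1; that is, x = cos θ, y = 0, z = sin θ for some constant angle θ. -/

import Mathlib

open Real

/-- Bertrand condition forces `x = cos θ`, `y = 0`, `z = sin θ`
for some constant θ. -/
theorem bertrand_direction_coefficients
    (κ τ x y z x' y' z' : ℝ → ℝ)
    (hκ : ∀ s, 0 < κ s)
    (hx : ∀ s, HasDerivAt x (x' s) s)
    (hy : ∀ s, HasDerivAt y (y' s) s)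
    (hz : ∀ s, HasDerivAt z (z' s) s)
    (hunit : ∀ s, x s ^ 2 + y s ^ 2 + z s ^ 2 = 1)
    (hb1 : ∀ s, x' s - y s * κ s = 0)
    (hb2 : ∀ s, z' s + y s * τ s = 0)
    (hb3 : ∀ s, y' s + x s * κ s - z s * τ s ≠ 0) :
    ∃ θ : ℝ, ∀ s, x s = cos θ ∧ y s = 0 ∧ z s = sin θ := by
  -- y ≡ 0
  have hy0 : ∀ s, y s = 0 := by
    intro s
    have hsum : HasDerivAt (fun t => x t ^ 2 + y t ^ 2 + z t ^ 2)
        (2 * x s * x' s + 2 * y s * y' s + 2 * z s * z' s) s := by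
      have := (((hx s).fun_pow 2).fun_add ((hy s).fun_pow 2)).fun_add ((hz s).fun_pow 2)
      refine this.congr_deriv ?_
      norm_num
    have hconst : (fun t => x t ^ 2 + y t ^ 2 + z t ^ 2) = fun _ : ℝ => (1 : ℝ) :=
      funext fun t => hunit t
    rw [hconst] at hsum
    have hzero : 2 * x s * x' s + 2 * y s * y' s + 2 * z s * z' s = 0 :=
      hsum.unique (hasDerivAt_const s 1)
    have h1 := hb1 s
    have h2 := hb2 s
    have hx' : x' s = y s * κ s := by linarith
    have hz' : z' s = -(y s * τ s) := by linarith
    rw [hx', hz'] at hzero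
    have : y s * (y' s + x s * κ s - z s * τ s) = 0 := by nlinarith
    rcases mul_eq_zero.mp this with h | h
    · exact h
    · exact absurd h (hb3 s)
  -- x' ≡ 0, z' ≡ 0
  have hx0 : ∀ s, x' s = 0 := fun s => by have := hb1 s; rw [hy0 s] at this; linarith
  have hz0 : ∀ s, z' s = 0 := fun s => by have := hb2 s; rw [hy0 s] at this; linarith
  have hxc : ∀ s, x s = x 0 := by
    intro s
    have : ∀ t, HasDerivAt x 0 t := fun t => hx0 t ▸ hx t
    exact is_const_of_deriv_eq_zero (fun t => (this t).differentiableAt)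
      (fun t => (this t).deriv) s 0
  have hzc : ∀ s, z s = z 0 := by
    intro s
    have : ∀ t, HasDerivAt z 0 t := fun t => hz0 t ▸ hz t
    exact is_const_of_deriv_eq_zero (fun t => (this t).differentiableAt)
      (fun t => (this t).deriv) s 0
  have hcirc : x 0 ^ 2 + z 0 ^ 2 = 1 := by
    have := hunit 0; rw [hy0 0] at this; nlinarith
  have hx1 : |x 0| ≤ 1 := abs_le.mpr ⟨by nlinarith, by nlinarith⟩
  set θ := if 0 ≤ z 0 then Real.arccos (x 0) else -Real.arccos (x 0) with hθ
  have hcos : Real.cos θ = x 0 := by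
    rw [hθ]; split_ifs
    · exact Real.cos_arccos (neg_le_of_abs_le hx1) (le_of_abs_le hx1)
    · rw [Real.cos_neg]; exact Real.cos_arccos (neg_le_of_abs_le hx1) (le_of_abs_le hx1)
  have hsin : Real.sin θ = z 0 := by
    have hs : Real.sin (Real.arccos (x 0)) = Real.sqrt (1 - x 0 ^ 2) :=
      Real.sin_arccos (x 0)
    have hsq : Real.sqrt (1 - x 0 ^ 2) = |z 0| := by
      rw [show (1 : ℝ) - x 0 ^ 2 = z 0 ^ 2 by linarith, Real.sqrt_sq_eq_abs]
    rw [hθ]; split_ifs with h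
    · rw [hs, hsq, abs_of_nonneg h]
    · rw [Real.sin_neg, hs, hsq, abs_of_neg (lt_of_not_ge h)]; ring
  exact ⟨θ, fun s => ⟨by rw [hxc s, hcos], hy0 s, by rw [hzc s, hsin]⟩⟩
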